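/- Let ξ ~ Poisson(λ) with λ > 0 and ξ̂ = (ξ − λ)/λ. Then for every integer ℓ ≥ 1, E[|ξ̂|^ℓ] ≤ (E[ξ̂^{ℓ+1}])^{ℓ/(ℓ+1)} when ℓ is odd (so ℓ+1 is even), and consequently E[|ξ̂|^ℓ] = O(ℓ! λ^{−ℓ/2}) for all ℓ, i.e., there exists an absolute constant C with E[|(ξ−λ)/λ|^ℓ] ≤ C^ℓ ℓ! λ^{−ℓ/2} for all integers ℓ ≥ 1 and all λ ≥ 1. -/

import Mathlib

open Real



lemma exp_tsum (x : ℝ) : ∑' n : ℕ, x ^ n / n.factorial = Real.exp x := by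
  rw [Real.exp_eq_exp_ℝ, NormedSpace.exp_eq_tsum_div]

lemma pow_div_fact_le_exp {x : ℝ} (hx : 0 ≤ x) (ν : ℕ) :
    x ^ ν / ν.factorial ≤ Real.exp x := by
  rw [← exp_tsum]
  exact Summable.le_tsum (Real.summable_pow_div_factorial x) ν (fun i _ => by positivity)

lemma pmf_exp_eq (lam s : ℝ) (k : ℕ) :
    (Real.exp (-lam) * lam ^ k / Nat.factorial k) * Real.exp (s * ((k : ℝ) - lam))
      = (Real.exp (-lam) * Real.exp (-(s * lam))) * ((lam * Real.exp s) ^ k / Nat.factorial k) := by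
  rw [mul_sub, Real.exp_sub, mul_pow, ← Real.exp_nat_mul, Real.exp_neg (s * lam)]
  field_simp

lemma summable_mgf (lam s : ℝ) :
    Summable (fun k : ℕ => (Real.exp (-lam) * lam ^ k / Nat.factorial k) *
      Real.exp (s * ((k : ℝ) - lam))) := by
  have := (Real.summable_pow_div_factorial (lam * Real.exp s)).mul_left
    (Real.exp (-lam) * Real.exp (-(s * lam)))
  exact this.congr (fun k => (pmf_exp_eq lam s k).symm)

lemma pmf_mgf (lam s : ℝ) : ∑' k : ℕ, (Real.exp (-lam) * lam ^ k / Nat.factorial k) *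
    Real.exp (s * ((k : ℝ) - lam)) = Real.exp (lam * Real.exp s - lam - s * lam) := by
  rw [tsum_congr (pmf_exp_eq lam s), tsum_mul_left, exp_tsum, ← Real.exp_add, ← Real.exp_add]
  ring_nf

lemma summable_moment {lam : ℝ} (hlam : 0 < lam) (ν : ℕ) :
    Summable (fun k : ℕ => (Real.exp (-lam) * lam ^ k / Nat.factorial k) *
      |((k : ℝ) - lam) / lam| ^ ν) := by
  have hle : ∀ k : ℕ, (Real.exp (-lam) * lam ^ k / Nat.factorial k) *
      |((k : ℝ) - lam) / lam| ^ ν ≤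
      ((Nat.factorial ν : ℝ) / lam ^ ν) * ((Real.exp 1 * lam) ^ k / Nat.factorial k) := by
    intro k
    have h1 : |((k : ℝ) - lam)| ≤ (k : ℝ) + lam := by
      calc |((k : ℝ) - lam)| ≤ |(k : ℝ)| + |lam| := abs_sub _ _
        _ = (k : ℝ) + lam := by rw [abs_of_nonneg (Nat.cast_nonneg k), abs_of_pos hlam]
    have h2 : ((k : ℝ) + lam) ^ ν ≤ Nat.factorial ν * Real.exp ((k : ℝ) + lam) := by
      have h3 := pow_div_fact_le_exp (by positivity : (0:ℝ) ≤ (k : ℝ) + lam) ν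
      rw [div_le_iff₀ (by positivity)] at h3
      linarith [h3]
    have hek : Real.exp ((k : ℝ)) = Real.exp 1 ^ k := by
      rw [← Real.exp_nat_mul, mul_one]
    have h4 : Real.exp (-lam) * Real.exp lam = 1 := by rw [← Real.exp_add]; simp
    calc (Real.exp (-lam) * lam ^ k / Nat.factorial k) * |((k : ℝ) - lam) / lam| ^ ν
        = (Real.exp (-lam) * lam ^ k / Nat.factorial k) * (|(k : ℝ) - lam| ^ ν / lam ^ ν) := by
          rw [abs_div, abs_of_pos hlam, div_pow]
      _ ≤ (Real.exp (-lam) * lam ^ k / Nat.factorial k) *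
            ((Nat.factorial ν * Real.exp ((k : ℝ) + lam)) / lam ^ ν) := by
          refine mul_le_mul_of_nonneg_left ?_ (by positivity)
          exact (div_le_div_iff_of_pos_right (pow_pos hlam ν)).mpr ((pow_le_pow_left₀ (abs_nonneg _) h1 ν).trans h2)
      _ = ((Nat.factorial ν : ℝ) / lam ^ ν) * ((Real.exp 1 * lam) ^ k / Nat.factorial k) *
            (Real.exp (-lam) * Real.exp lam) := by
          rw [Real.exp_add, hek, mul_pow]; ring
      _ = ((Nat.factorial ν : ℝ) / lam ^ ν) * ((Real.exp 1 * lam) ^ k / Nat.factorial k) := by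
          rw [h4, mul_one]
  exact Summable.of_nonneg_of_le (fun k => by positivity) hle
    ((Real.summable_pow_div_factorial (Real.exp 1 * lam)).mul_left _)
open Real

lemma tsum_pmf (lam : ℝ) : ∑' k : ℕ, Real.exp (-lam) * lam ^ k / Nat.factorial k = 1 := by
  have h := pmf_mgf lam 0
  simpa using h

lemma exp_quad {t : ℝ} (h : |t| ≤ 1) : Real.exp t ≤ 1 + t + t ^ 2 := by
  have hb := Real.exp_bound h (by norm_num : 0 < 2)
  simp [Finset.sum_range_succ] at hb
  rw [abs_le] at hb
  nlinarith [sq_abs t, hb.2]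

lemma even_moment {lam : ℝ} (hlam : 1 ≤ lam) (m : ℕ) :
    ∑' k : ℕ, (Real.exp (-lam) * lam ^ k / Nat.factorial k) *
      |((k : ℝ) - lam) / lam| ^ (2 * m) ≤
    2 * Real.exp 1 * (Nat.factorial (2 * m)) / lam ^ m := by
  have hl0 : (0:ℝ) < lam := lt_of_lt_of_le one_pos hlam
  set t : ℝ := (Real.sqrt lam)⁻¹ with ht_def
  have hs1 : 1 ≤ Real.sqrt lam := by
    rw [show (1:ℝ) = Real.sqrt 1 by simp]; exact Real.sqrt_le_sqrt hlam
  have ht0 : 0 < t := inv_pos.mpr (lt_of_lt_of_le one_pos hs1)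
  have ht1 : t ≤ 1 := inv_le_one_of_one_le₀ hs1
  have ht2 : t ^ 2 = lam⁻¹ := by
    rw [ht_def, ← Real.sqrt_inv, Real.sq_sqrt (inv_nonneg.mpr hl0.le)]
  -- pointwise bound
  have key : ∀ k : ℕ, (Real.exp (-lam) * lam ^ k / Nat.factorial k) *
      |((k : ℝ) - lam) / lam| ^ (2 * m) ≤
      ((Nat.factorial (2 * m) : ℝ) / lam ^ m) *
        ((Real.exp (-lam) * lam ^ k / Nat.factorial k) *
          (Real.exp (t * ((k : ℝ) - lam)) + Real.exp (-t * ((k : ℝ) - lam)))) := by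
    intro k
    set y : ℝ := t * ((k : ℝ) - lam) with hy
    have habs : |((k : ℝ) - lam) / lam| ^ (2 * m) = |y| ^ (2 * m) / lam ^ m := by
      have h1 : |y| ^ (2 * m) = (lam ^ m)⁻¹ * |(k : ℝ) - lam| ^ (2 * m) := by
        rw [hy, abs_mul, abs_of_pos ht0, mul_pow, pow_mul, ht2, inv_pow]
      rw [abs_div, abs_of_pos hl0, div_pow, h1, two_mul, pow_add]
      have hlamne : lam ^ m ≠ 0 := (pow_pos hl0 m).ne'
      rw [pow_add]
      field_simp
    have hyb : |y| ^ (2 * m) ≤ (Nat.factorial (2 * m) : ℝ) *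
        (Real.exp y + Real.exp (-y)) := by
      have h1 := pow_div_fact_le_exp (abs_nonneg y) (2 * m)
      rw [div_le_iff₀ (by positivity)] at h1
      have h2 : Real.exp |y| ≤ Real.exp y + Real.exp (-y) := by
        rcases abs_cases y with ⟨he, _⟩ | ⟨he, _⟩ <;> rw [he] <;>
          [linarith [Real.exp_pos (-y)]; linarith [Real.exp_pos y]]
      nlinarith [Real.exp_pos y, Real.exp_pos (-y), (by positivity : (0:ℝ) < ((2*m).factorial : ℝ))]
    have hp : (0:ℝ) ≤ Real.exp (-lam) * lam ^ k / Nat.factorial k := by positivity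
    calc (Real.exp (-lam) * lam ^ k / Nat.factorial k) * |((k : ℝ) - lam) / lam| ^ (2 * m)
        = (Real.exp (-lam) * lam ^ k / Nat.factorial k) * (|y| ^ (2 * m) / lam ^ m) := by
          rw [habs]
      _ ≤ (Real.exp (-lam) * lam ^ k / Nat.factorial k) *
            (((Nat.factorial (2 * m) : ℝ) * (Real.exp y + Real.exp (-y))) / lam ^ m) := by
          refine mul_le_mul_of_nonneg_left ?_ hp
          exact (div_le_div_iff_of_pos_right (pow_pos hl0 m)).mpr hyb
      _ = ((Nat.factorial (2 * m) : ℝ) / lam ^ m) *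
            ((Real.exp (-lam) * lam ^ k / Nat.factorial k) *
              (Real.exp y + Real.exp (-y))) := by ring
      _ = ((Nat.factorial (2 * m) : ℝ) / lam ^ m) *
            ((Real.exp (-lam) * lam ^ k / Nat.factorial k) *
              (Real.exp (t * ((k : ℝ) - lam)) + Real.exp (-t * ((k : ℝ) - lam)))) := by
          rw [hy, neg_mul]
  -- summability of rhs
  have hsum_rhs : Summable (fun k : ℕ =>
      ((Nat.factorial (2 * m) : ℝ) / lam ^ m) *
        ((Real.exp (-lam) * lam ^ k / Nat.factorial k) *
          (Real.exp (t * ((k : ℝ) - lam)) + Real.exp (-t * ((k : ℝ) - lam))))) := by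
    apply Summable.mul_left
    have := (summable_mgf lam t).add (summable_mgf lam (-t))
    exact this.congr (fun k => by ring)
  have hle := Summable.tsum_le_tsum key (summable_moment hl0 (2 * m)) hsum_rhs
  refine hle.trans ?_
  rw [tsum_mul_left]
  have hsplit : ∑' k : ℕ, ((Real.exp (-lam) * lam ^ k / Nat.factorial k) *
      (Real.exp (t * ((k : ℝ) - lam)) + Real.exp (-t * ((k : ℝ) - lam))))
      = Real.exp (lam * Real.exp t - lam - t * lam) +
        Real.exp (lam * Real.exp (-t) - lam - (-t) * lam) := by
    rw [← pmf_mgf lam t, ← pmf_mgf lam (-t)]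
    rw [← Summable.tsum_add (summable_mgf lam t) (summable_mgf lam (-t))]
    exact tsum_congr (fun k => by ring)
  rw [hsplit]
  have hm1 : lam * Real.exp t - lam - t * lam ≤ 1 := by
    have := exp_quad (by rw [abs_of_pos ht0]; exact ht1)
    have h2 : lam * t ^ 2 = 1 := by rw [ht2]; field_simp
    nlinarith
  have hm2 : lam * Real.exp (-t) - lam - (-t) * lam ≤ 1 := by
    have := exp_quad (t := -t) (by rw [abs_neg, abs_of_pos ht0]; exact ht1)
    have h2 : lam * t ^ 2 = 1 := by rw [ht2]; field_simp
    nlinarith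
  have e1 : Real.exp (lam * Real.exp t - lam - t * lam) ≤ Real.exp 1 := Real.exp_le_exp.mpr hm1
  have e2 : Real.exp (lam * Real.exp (-t) - lam - (-t) * lam) ≤ Real.exp 1 := Real.exp_le_exp.mpr hm2
  have hsum2 : Real.exp (lam * Real.exp t - lam - t * lam) +
      Real.exp (lam * Real.exp (-t) - lam - (-t) * lam) ≤ 2 * Real.exp 1 := by linarith
  calc ((Nat.factorial (2 * m) : ℝ) / lam ^ m) *
        (Real.exp (lam * Real.exp t - lam - t * lam) +
          Real.exp (lam * Real.exp (-t) - lam - (-t) * lam))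
      ≤ ((Nat.factorial (2 * m) : ℝ) / lam ^ m) * (2 * Real.exp 1) :=
        mul_le_mul_of_nonneg_left hsum2 (by positivity)
    _ = 2 * Real.exp 1 * (Nat.factorial (2 * m)) / lam ^ m := by ring

lemma summable_pmf (lam : ℝ) :
    Summable (fun k : ℕ => Real.exp (-lam) * lam ^ k / Nat.factorial k) := by
  have := summable_mgf lam 0
  exact this.congr (fun k => by simp)

lemma lyapunov {lam : ℝ} (hlam : 0 < lam) {ℓ : ℕ} (hℓ : 1 ≤ ℓ) :
    ∑' k : ℕ, (Real.exp (-lam) * lam ^ k / Nat.factorial k) * |((k : ℝ) - lam) / lam| ^ ℓ ≤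
      (∑' k : ℕ, (Real.exp (-lam) * lam ^ k / Nat.factorial k) *
        |((k : ℝ) - lam) / lam| ^ (ℓ + 1)) ^ ((ℓ : ℝ) / ((ℓ : ℝ) + 1)) := by
  have hℓR : (1:ℝ) ≤ (ℓ : ℝ) := by exact_mod_cast hℓ
  have hℓ0 : (ℓ:ℝ) ≠ 0 := by linarith
  have hℓpos : (0:ℝ) < (ℓ:ℝ) := by linarith
  set P : ℝ := ((ℓ:ℝ) + 1) / (ℓ:ℝ) with hP
  set Q : ℝ := (ℓ:ℝ) + 1 with hQ
  have hQpos : (0:ℝ) < Q := by rw [hQ]; linarith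
  have hpq : P.HolderConjugate Q := by
    rw [Real.holderConjugate_iff]
    constructor
    · rw [hP, lt_div_iff₀ hℓpos]; linarith
    · rw [hP, hQ]; field_simp
  set W : ℕ → ℝ := fun k => Real.exp (-lam) * lam ^ k / Nat.factorial k with hW
  have hWpos : ∀ k, 0 < W k := fun k => by
    rw [hW]; positivity
  set X : ℕ → ℝ := fun k => |((k : ℝ) - lam) / lam| with hX
  have hXnn : ∀ k, 0 ≤ X k := fun k => abs_nonneg _
  set f : ℕ → ℝ := fun k => (W k) ^ ((ℓ:ℝ) / Q) * X k ^ ℓ with hf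
  set g : ℕ → ℝ := fun k => (W k) ^ ((1:ℝ) / Q) with hg
  have hfnn : ∀ k, 0 ≤ f k := fun k => by
    rw [hf]; positivity
  have hgnn : ∀ k, 0 ≤ g k := fun k => by
    rw [hg]; positivity
  have hfg : ∀ k, f k * g k = W k * X k ^ ℓ := by
    intro k
    rw [hf, hg]
    simp only
    rw [mul_right_comm, ← Real.rpow_add (hWpos k)]
    have h0 : (ℓ:ℝ) / Q + 1 / Q = 1 := by rw [hQ]; field_simp
    rw [h0, Real.rpow_one]
  have hfP : ∀ k, f k ^ P = W k * X k ^ (ℓ + 1) := by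
    intro k
    rw [hf]
    simp only
    rw [Real.mul_rpow (Real.rpow_nonneg (hWpos k).le _) (pow_nonneg (hXnn k) _)]
    rw [← Real.rpow_natCast (X k) ℓ, ← Real.rpow_mul (hWpos k).le, ← Real.rpow_mul (hXnn k)]
    have h1 : (ℓ:ℝ) / Q * P = 1 := by rw [hP, hQ]; field_simp
    have h2 : (ℓ:ℝ) * P = (ℓ:ℝ) + 1 := by rw [hP]; field_simp; exact hQ
    rw [h1, h2, Real.rpow_one]
    congr 1
    rw [← Real.rpow_natCast (X k) (ℓ + 1)]
    push_cast
    ring_nf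
  have hgQ : ∀ k, g k ^ Q = W k := by
    intro k
    rw [hg]
    simp only
    rw [← Real.rpow_mul (hWpos k).le, one_div_mul_cancel hQpos.ne', Real.rpow_one]
  have hf_sum : Summable (fun k => f k ^ P) :=
    (summable_moment hlam (ℓ + 1)).congr (fun k => (hfP k).symm)
  have hg_sum : Summable (fun k => g k ^ Q) :=
    (summable_pmf lam).congr (fun k => (hgQ k).symm)
  have key := Real.inner_le_Lp_mul_Lq_tsum_of_nonneg hpq hfnn hgnn hf_sum hg_sum
  rw [tsum_congr hfg, tsum_congr hfP, tsum_congr hgQ] at key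
  rw [show ∑' k, W k = 1 from tsum_pmf lam, Real.one_rpow, mul_one] at key
  have hexp : 1 / P = (ℓ:ℝ) / ((ℓ:ℝ) + 1) := by rw [hP]; field_simp; exact hQ.symm
  rw [hexp] at key
  exact key


/-- For `ξ ~ Poisson(lam)` and `ξ̂ = (ξ − lam)/lam`: for odd `ℓ ≥ 1` one has the Lyapunov
bound `E[|ξ̂|^ℓ] ≤ (E[ξ̂^{ℓ+1}])^{ℓ/(ℓ+1)}`, and there is an absolute constant `C` with
`E[|ξ̂|^ℓ] ≤ C^ℓ ℓ! lam^{−ℓ/2}` for all `ℓ ≥ 1` and `lam ≥ 1`. -/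
theorem poisson_hat_abs_moment_bound :
    (∀ lam : ℝ, 0 < lam → ∀ ℓ : ℕ, 1 ≤ ℓ → Odd ℓ →
      ∑' k : ℕ, (Real.exp (-lam) * lam ^ k / Nat.factorial k) *
          |((k : ℝ) - lam) / lam| ^ ℓ ≤
        (∑' k : ℕ, (Real.exp (-lam) * lam ^ k / Nat.factorial k) *
            (((k : ℝ) - lam) / lam) ^ (ℓ + 1)) ^ ((ℓ : ℝ) / ((ℓ : ℝ) + 1))) ∧
    ∃ C : ℝ, 0 < C ∧ ∀ ℓ : ℕ, 1 ≤ ℓ → ∀ lam : ℝ, 1 ≤ lam →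
      ∑' k : ℕ, (Real.exp (-lam) * lam ^ k / Nat.factorial k) *
          |((k : ℝ) - lam) / lam| ^ ℓ ≤
        C ^ ℓ * (Nat.factorial ℓ : ℝ) * lam ^ (-(ℓ : ℝ) / 2) := by
  constructor
  · intro lam hlam ℓ hℓ hodd
    have hev : Even (ℓ + 1) := Odd.add_one hodd
    have hrw : ∑' k : ℕ, (Real.exp (-lam) * lam ^ k / Nat.factorial k) *
        (((k : ℝ) - lam) / lam) ^ (ℓ + 1) =
        ∑' k : ℕ, (Real.exp (-lam) * lam ^ k / Nat.factorial k) *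
        |((k : ℝ) - lam) / lam| ^ (ℓ + 1) :=
      tsum_congr (fun k => by rw [Even.pow_abs hev])
    rw [hrw]
    exact lyapunov hlam hℓ
  · refine ⟨12, by norm_num, ?_⟩
    intro ℓ hℓ lam hlam
    have hl0 : (0:ℝ) < lam := lt_of_lt_of_le one_pos hlam
    have hexp1 : Real.exp 1 ≤ 3 := by
      have := Real.exp_one_lt_d9
      linarith
    rcases Nat.even_or_odd ℓ with he | ho
    · -- even case
      obtain ⟨m, hm⟩ := he
      have hℓ2m : ℓ = 2 * m := by omega
      have hm1 : 1 ≤ m := by omega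
      have hb := even_moment hlam m
      subst hℓ2m
      have hrw : lam ^ (-((2 * m : ℕ) : ℝ) / 2) = (lam ^ m)⁻¹ := by
        push_cast
        rw [show -(2 * (m:ℝ)) / 2 = -(m:ℝ) by ring]
        rw [Real.rpow_neg hl0.le, Real.rpow_natCast]
      rw [hrw]
      refine hb.trans ?_
      have h6 : (2 * Real.exp 1 : ℝ) ≤ 12 ^ (2 * m) := by
        have : (12:ℝ) ≤ 12 ^ (2 * m) := le_self_pow₀ (by norm_num) (by omega)
        linarith
      have hnn : (0:ℝ) ≤ (Nat.factorial (2 * m) : ℝ) * (lam ^ m)⁻¹ := by positivity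
      calc 2 * Real.exp 1 * (Nat.factorial (2 * m) : ℝ) / lam ^ m
          = (2 * Real.exp 1) * ((Nat.factorial (2 * m) : ℝ) * (lam ^ m)⁻¹) := by ring
        _ ≤ 12 ^ (2 * m) * ((Nat.factorial (2 * m) : ℝ) * (lam ^ m)⁻¹) :=
            mul_le_mul_of_nonneg_right h6 hnn
        _ = 12 ^ (2 * m) * (Nat.factorial (2 * m) : ℝ) * (lam ^ m)⁻¹ := by ring
    · -- odd case
      obtain ⟨m', hm'⟩ := ho
      set m := m' + 1 with hmdef
      have h2m : ℓ + 1 = 2 * m := by omega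
      have hm1 : 1 ≤ m := by omega
      have hmR : ((ℓ:ℝ) + 1) = 2 * (m:ℝ) := by exact_mod_cast h2m
      have hmpos : (0:ℝ) < (m:ℝ) := by positivity
      set θ : ℝ := (ℓ:ℝ) / ((ℓ:ℝ) + 1) with hθdef
      have hℓpos : (0:ℝ) < (ℓ:ℝ) := by exact_mod_cast hℓ
      have hθnn : 0 ≤ θ := by positivity
      have hθ1 : θ ≤ 1 := by
        rw [hθdef, div_le_one (by linarith)]; linarith
      have hstep1 := lyapunov hl0 hℓ
      set T : ℝ := ∑' k : ℕ, (Real.exp (-lam) * lam ^ k / Nat.factorial k) *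
        |((k : ℝ) - lam) / lam| ^ (ℓ + 1) with hT
      have hTnn : 0 ≤ T := tsum_nonneg (fun k => by positivity)
      have hb' : T ≤ 2 * Real.exp 1 * (Nat.factorial (ℓ + 1) : ℝ) / lam ^ m := by
        have hb := even_moment hlam m
        rw [← h2m] at hb
        exact hb
      set A : ℝ := 2 * Real.exp 1 * (Nat.factorial (ℓ + 1) : ℝ) with hA
      have hA1 : (1:ℝ) ≤ A := by
        rw [hA]
        have h1 : (1:ℝ) ≤ Real.exp 1 := by
          have := Real.add_one_le_exp (1:ℝ); linarith
        have h2 : (1:ℝ) ≤ (Nat.factorial (ℓ + 1) : ℝ) := by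
          exact_mod_cast Nat.one_le_iff_ne_zero.mpr (Nat.factorial_ne_zero _)
        nlinarith
      have h1 : T ^ θ ≤ (A / lam ^ m) ^ θ := Real.rpow_le_rpow hTnn hb' hθnn
      have h2 : (A / lam ^ m) ^ θ = A ^ θ * lam ^ (-(ℓ:ℝ) / 2) := by
        have hd : A / lam ^ m = A * lam ^ (-(m:ℝ)) := by
          rw [Real.rpow_neg hl0.le, Real.rpow_natCast, div_eq_mul_inv]
        have harith : -(m:ℝ) * θ = -(ℓ:ℝ) / 2 := by
          rw [hθdef]
          rw [show ((ℓ:ℝ) + 1) = 2 * (m:ℝ) from hmR]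
          field_simp
        rw [hd, Real.mul_rpow (by linarith) (Real.rpow_nonneg hl0.le _),
          ← Real.rpow_mul hl0.le, harith]
      have h3 : A ^ θ ≤ A := by
        calc A ^ θ ≤ A ^ (1:ℝ) := Real.rpow_le_rpow_of_exponent_le hA1 hθ1
          _ = A := Real.rpow_one A
      have h4 : A ≤ 12 ^ ℓ * (Nat.factorial ℓ : ℝ) := by
        have hfact : (Nat.factorial (ℓ + 1) : ℝ) = ((ℓ:ℝ) + 1) * (Nat.factorial ℓ : ℝ) := by
          rw [Nat.factorial_succ]; push_cast; ring
        have hp2 : (ℓ:ℝ) + 1 ≤ (2:ℝ) ^ ℓ := by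
          exact_mod_cast Nat.lt_two_pow_self (n := ℓ)
        have h66 : (6:ℝ) ≤ 6 ^ ℓ := le_self_pow₀ (by norm_num) (by omega)
        have hc : 2 * Real.exp 1 * ((ℓ:ℝ) + 1) ≤ 12 ^ ℓ := by
          calc 2 * Real.exp 1 * ((ℓ:ℝ) + 1) ≤ 6 * (2:ℝ) ^ ℓ := by
                nlinarith [Real.exp_pos 1, pow_pos (show (0:ℝ) < 2 by norm_num) ℓ]
            _ ≤ 6 ^ ℓ * 2 ^ ℓ := by
                nlinarith [pow_pos (show (0:ℝ) < 2 by norm_num) ℓ]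
            _ = 12 ^ ℓ := by rw [← mul_pow]; norm_num
        have hfnn : (0:ℝ) ≤ (Nat.factorial ℓ : ℝ) := by positivity
        calc A = (2 * Real.exp 1 * ((ℓ:ℝ) + 1)) * (Nat.factorial ℓ : ℝ) := by
              rw [hA, hfact]; ring
          _ ≤ 12 ^ ℓ * (Nat.factorial ℓ : ℝ) := mul_le_mul_of_nonneg_right hc hfnn
      have hrnn : (0:ℝ) ≤ lam ^ (-(ℓ:ℝ) / 2) := Real.rpow_nonneg hl0.le _
      calc ∑' k : ℕ, (Real.exp (-lam) * lam ^ k / Nat.factorial k) *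
            |((k : ℝ) - lam) / lam| ^ ℓ
          ≤ T ^ θ := hstep1
        _ ≤ (A / lam ^ m) ^ θ := h1
        _ = A ^ θ * lam ^ (-(ℓ:ℝ) / 2) := h2
        _ ≤ A * lam ^ (-(ℓ:ℝ) / 2) := mul_le_mul_of_nonneg_right h3 hrnn
        _ ≤ (12 ^ ℓ * (Nat.factorial ℓ : ℝ)) * lam ^ (-(ℓ:ℝ) / 2) :=
            mul_le_mul_of_nonneg_right h4 hrnn
        _ = 12 ^ ℓ * (Nat.factorial ℓ : ℝ) * lam ^ (-(ℓ:ℝ) / 2) := by ring
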